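/- Let $a_1, a_2, a_3, b_1, b_2, b_3 \in \mathbb{C}$ be nonzero. The system of equations $\xi_i^2 = a_i \sigma$, $\eta_i^2 = b_i \sigma$ for $i = 1, 2, 3$, where $\sigma = \xi_1\eta_1 + \xi_2\eta_2 + \xi_3\eta_3$, has a solution $(\xi, \eta) \in \mathbb{C}^6$ with $\sigma \ne 0$ if and only if there exist choices of square roots such that $\sqrt{a_1 b_1} + \sqrt{a_2 b_2} + \sqrt{a_3 b_3} = 1$, i.e. if and only if $\prod_{\epsilon_2, \epsilon_3 \in \{\pm 1\}} \big( \sqrt{a_1 b_1} + \epsilon_2 \sqrt{a_2 b_2} + \epsilon_3 \sqrt{a_3 b_3} - 1 \big) = 0$ for some fixed choices of $\sqrt{a_i b_i}$. -/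

import Mathlib

/-- the system `ξᵢ² = aᵢσ`, `ηᵢ² = bᵢσ` with `σ = Σ ξᵢηᵢ` has a solution
with `σ ≠ 0` iff for some choices of square roots `√(aᵢbᵢ)` one has
`√(a₁b₁) + √(a₂b₂) + √(a₃b₃) = 1`. -/
theorem stmt11 (A B : Fin 3 → ℂ) (hA : ∀ i, A i ≠ 0) (hB : ∀ i, B i ≠ 0) :
    (∃ ξ η : Fin 3 → ℂ,
        (∀ i, ξ i ^ 2 = A i * (∑ j, ξ j * η j) ∧ η i ^ 2 = B i * (∑ j, ξ j * η j)) ∧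
        (∑ j, ξ j * η j) ≠ 0) ↔
    (∃ r : Fin 3 → ℂ, (∀ i, r i ^ 2 = A i * B i) ∧ r 0 + r 1 + r 2 = 1) := by
  constructor
  · rintro ⟨ξ, η, h, hσ⟩
    set σ := ∑ j, ξ j * η j with hσdef
    refine ⟨fun i => ξ i * η i / σ, fun i => ?_, ?_⟩
    · have h1 := (h i).1
      have h2 := (h i).2
      have : (ξ i * η i) ^ 2 = A i * B i * σ ^ 2 := by
        rw [mul_pow, h1, h2]; ring
      field_simp
      linear_combination this
    · have hs : ξ 0 * η 0 + ξ 1 * η 1 + ξ 2 * η 2 = σ := by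
        rw [hσdef, Fin.sum_univ_three]
      simp only [← add_div]
      rw [hs, div_self hσ]
  · rintro ⟨r, hr, hsum⟩
    choose ξ hξ using fun i => IsAlgClosed.exists_pow_nat_eq (A i) (n := 2) zero_lt_two
    have hξne : ∀ i, ξ i ≠ 0 := by
      intro i hz
      exact hA i (by rw [← hξ i, hz]; ring)
    refine ⟨ξ, fun i => r i / ξ i, ?_, ?_⟩
    · have hs : (∑ j, ξ j * (r j / ξ j)) = 1 := by
        rw [Fin.sum_univ_three, mul_div_cancel₀ _ (hξne 0), mul_div_cancel₀ _ (hξne 1),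
          mul_div_cancel₀ _ (hξne 2), hsum]
      intro i
      rw [hs]
      constructor
      · rw [hξ i]; ring
      · rw [div_pow, hr i, hξ i]
        rw [mul_comm, mul_one]
        exact mul_div_cancel_right₀ (B i) (hA i)
    · rw [Fin.sum_univ_three, mul_div_cancel₀ _ (hξne 0), mul_div_cancel₀ _ (hξne 1),
        mul_div_cancel₀ _ (hξne 2), hsum]
      exact one_ne_zero
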